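/- Let U = V ⊕ W be a direct sum of two unitary representations of a compact group C, p : U → V the projection, μ_V a fixed moment map on V and μ_U its unique extension to U. Then the preimage under p of the set of stable (resp. semistable) points of V is contained in the set of stable (resp. semistable) points of U. -/

import Mathlib

/-!
STATEMENT 5: Let `U = V ⊕ W` be an orthogonal direct sum of two unitary
representations of a compact group `C`, `p : U → V` the projection, `μ_V` a
fixed moment map on `V` (with constant term `θ`) and `μ_U` its unique
extension to `U` (same constant term `θ`). With stability and semistability
defined by the Hilbert–Mumford criterion on μ-weights
(`w^ξ(v) = lim_{t→∞} ⟨μ(exp(√-1 t ξ)v), ξ⟩`, as a limsup in `EReal`):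
`p⁻¹(V^s) ⊆ U^s` and `p⁻¹(V^{ss}) ⊆ U^{ss}`.
-/

open scoped InnerProductSpace
open Filter

namespace Stmt5

/-- The μ-weight of `(v, ξ)` for a unitary representation with infinitesimal
action `ρ` and moment-map constant `θ`. -/
noncomputable def weight
    (E : Type*) [NormedAddCommGroup E] [InnerProductSpace ℂ E]
    (𝔠 : Type*) [NormedAddCommGroup 𝔠] [InnerProductSpace ℝ 𝔠]
    (ρ : 𝔠 →ₗ[ℝ] (E →L[ℂ] E)) (θ : 𝔠 →ₗ[ℝ] ℝ) (ξ : 𝔠) (v : E) : EReal :=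
  Filter.limsup (fun t : ℝ =>
    (((1/2 : ℝ) * (⟪ρ ξ (NormedSpace.exp ((t : ℂ) • (Complex.I • ρ ξ)) v),
        NormedSpace.exp ((t : ℂ) • (Complex.I • ρ ξ)) v⟫_ℂ).im + θ ξ : ℝ) : EReal)) atTop

/-- Hilbert–Mumford: stable iff all μ-weights at `ξ ≠ 0` are positive. -/
noncomputable def IsStable
    (E : Type*) [NormedAddCommGroup E] [InnerProductSpace ℂ E]
    (𝔠 : Type*) [NormedAddCommGroup 𝔠] [InnerProductSpace ℝ 𝔠]
    (ρ : 𝔠 →ₗ[ℝ] (E →L[ℂ] E)) (θ : 𝔠 →ₗ[ℝ] ℝ) (v : E) : Prop :=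
  ∀ ξ : 𝔠, ξ ≠ 0 → 0 < weight E 𝔠 ρ θ ξ v

/-- Hilbert–Mumford: semistable iff all μ-weights at `ξ ≠ 0` are nonnegative. -/
noncomputable def IsSemistable
    (E : Type*) [NormedAddCommGroup E] [InnerProductSpace ℂ E]
    (𝔠 : Type*) [NormedAddCommGroup 𝔠] [InnerProductSpace ℝ 𝔠]
    (ρ : 𝔠 →ₗ[ℝ] (E →L[ℂ] E)) (θ : 𝔠 →ₗ[ℝ] ℝ) (v : E) : Prop :=
  ∀ ξ : 𝔠, ξ ≠ 0 → 0 ≤ weight E 𝔠 ρ θ ξ v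

end Stmt5


namespace Stmt5Aux


/-- Exponentials intertwine along an equivariant isometric embedding. -/
lemma exp_intertwine {E F : Type*}
    [NormedAddCommGroup E] [InnerProductSpace ℂ E] [FiniteDimensional ℂ E]
    [NormedAddCommGroup F] [InnerProductSpace ℂ F] [FiniteDimensional ℂ F]
    (j : E →ₗᵢ[ℂ] F) (BE : E →L[ℂ] E) (BF : F →L[ℂ] F)
    (h : ∀ x, BF (j x) = j (BE x)) (x : E) :
    NormedSpace.exp BF (j x) = j (NormedSpace.exp BE x) := by
  have hpow : ∀ (n : ℕ) (y : E), (BF ^ n) (j y) = j ((BE ^ n) y) := by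
    intro n
    induction n with
    | zero => intro y; simp
    | succ n ih =>
      intro y
      rw [pow_succ, pow_succ, ContinuousLinearMap.mul_apply,
        ContinuousLinearMap.mul_apply, h, ih]
  have h1 : NormedSpace.exp BF (j x) = ∑' n : ℕ, ((Nat.factorial n : ℂ)⁻¹) • j ((BE ^ n) x) := by
    rw [NormedSpace.exp_eq_tsum (𝕂 := ℂ)]
    have := (ContinuousLinearMap.apply ℂ F (j x)).map_tsum
      (NormedSpace.expSeries_summable' (𝕂 := ℂ) BF)
    simp only [ContinuousLinearMap.apply_apply, ContinuousLinearMap.smul_apply] at this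
    rw [this]
    exact tsum_congr fun n => by rw [hpow]
  have h2 : j (NormedSpace.exp BE x) = ∑' n : ℕ, ((Nat.factorial n : ℂ)⁻¹) • j ((BE ^ n) x) := by
    rw [NormedSpace.exp_eq_tsum (𝕂 := ℂ)]
    have := (j.toContinuousLinearMap.comp (ContinuousLinearMap.apply ℂ E x)).map_tsum
      (NormedSpace.expSeries_summable' (𝕂 := ℂ) BE)
    simp only [ContinuousLinearMap.comp_apply, ContinuousLinearMap.apply_apply,
      ContinuousLinearMap.smul_apply, LinearIsometry.coe_toContinuousLinearMap,
      map_smul] at this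
    exact this
  rw [h1, h2]



variable {W : Type*} [NormedAddCommGroup W] [InnerProductSpace ℂ W] [FiniteDimensional ℂ W]

/-- Positivity of the asymptotic slope:
if `R` is skew-Hermitian, the function `q t = (1/2) Im ⟪R φ(t), φ(t)⟫` with
`φ t = exp(t i R) b` has `liminf ≥ 0` (as `EReal`) at `+∞`. -/
lemma liminf_nonneg (R : W →L[ℂ] W) (hskew : ∀ x y : W, ⟪R x, y⟫_ℂ = - ⟪x, R y⟫_ℂ) (b : W) :
    (0 : EReal) ≤ liminf (fun t : ℝ =>
      (((1/2 : ℝ) * (⟪R (NormedSpace.exp ((t : ℂ) • (Complex.I • R)) b),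
        NormedSpace.exp ((t : ℂ) • (Complex.I • R)) b⟫_ℂ).im : ℝ) : EReal)) atTop := by
  set A : W →L[ℂ] W := Complex.I • R with hA
  set φ : ℝ → W := fun t => NormedSpace.exp ((t : ℂ) • A) b with hφdef
  set q : ℝ → ℝ := fun t => (1/2 : ℝ) * (⟪R (φ t), φ t⟫_ℂ).im with hqdef
  -- A is Hermitian
  have hherm : ∀ x y : W, ⟪A x, y⟫_ℂ = ⟪x, A y⟫_ℂ := by
    intro x y
    simp only [hA, ContinuousLinearMap.smul_apply, inner_smul_left, inner_smul_right,
      Complex.conj_I, hskew]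
    ring
  have hres : ∀ x : W, (⟪x, x⟫_ℂ).re = ‖x‖ ^ 2 := by
    intro x
    rw [inner_self_eq_norm_sq_to_K (𝕜 := ℂ) x]
    norm_cast
  -- rewrite q through A
  have hq_re : ∀ x : W, (⟪R x, x⟫_ℂ).im = (⟪A x, x⟫_ℂ).re := by
    intro x
    simp [hA, ContinuousLinearMap.smul_apply, inner_smul_left, Complex.conj_I]
  -- derivative of φ
  have hφ : ∀ t : ℝ, HasDerivAt φ (A (φ t)) t := by
    intro t
    have h1 : HasDerivAt (fun z : ℂ => NormedSpace.exp (z • A))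
        (NormedSpace.exp ((t : ℂ) • A) * A) (t : ℂ) :=
      hasDerivAt_exp_smul_const A ((t : ℝ) : ℂ)
    have h2 : HasDerivAt (fun s : ℝ => NormedSpace.exp ((s : ℂ) • A))
        (NormedSpace.exp ((t : ℂ) • A) * A) t := by
      have := HasDerivAt.scomp (𝕜 := ℝ) (𝕜' := ℂ) t h1 Complex.ofRealCLM.hasDerivAt
      exact this.congr_deriv (by simp)
    have h3 := ((ContinuousLinearMap.apply ℂ W b).restrictScalars
      ℝ).hasFDerivAt.comp_hasDerivAt t h2
    have h4 : HasDerivAt φ ((NormedSpace.exp ((t : ℂ) • A)) (A b)) t := by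
      exact h3
    have hc : (NormedSpace.exp ((t : ℂ) • A)) (A b) = A (φ t) := by
      have hcomm : A * NormedSpace.exp ((t : ℂ) • A)
          = NormedSpace.exp ((t : ℂ) • A) * A :=
        (((Commute.refl A).smul_right ((t : ℝ) : ℂ)).exp_right).eq
      calc (NormedSpace.exp ((t : ℂ) • A)) (A b)
          = (NormedSpace.exp ((t : ℂ) • A) * A) b := rfl
        _ = (A * NormedSpace.exp ((t : ℂ) • A)) b := by rw [hcomm]
        _ = A (φ t) := rfl
    rw [hc] at h4
    exact h4
  -- derivative of t ↦ A (φ t)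
  have hAφ : ∀ t : ℝ, HasDerivAt (fun t => A (φ t)) (A (A (φ t))) t := by
    intro t
    exact (A.restrictScalars ℝ).hasFDerivAt.comp_hasDerivAt t (hφ t)
  -- derivative of q
  have hq : ∀ t : ℝ, HasDerivAt q (‖A (φ t)‖ ^ 2) t := by
    intro t
    have hin := (hAφ t).inner (𝕜 := ℂ) (hφ t)
    have hre := Complex.reCLM.hasFDerivAt.comp_hasDerivAt t hin
    have hval : ((⟪A (φ t), A (φ t)⟫_ℂ + ⟪A (A (φ t)), φ t⟫_ℂ).re : ℝ)
        = 2 * ‖A (φ t)‖ ^ 2 := by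
      rw [hherm (A (φ t)) (φ t), Complex.add_re, hres]
      ring
    have hq_eq : q = fun t => (1/2 : ℝ) * (⟪A (φ t), φ t⟫_ℂ).re := by
      funext s; rw [hqdef]; simp only [hq_re]
    rw [hq_eq]
    have := hre.const_mul (1/2 : ℝ)
    simp only [Complex.reCLM_apply] at this ⊢
    refine this.congr_deriv ?_
    rw [hval]; ring
  -- q is monotone
  have hqmono : Monotone q :=
    monotone_of_hasDerivAt_nonneg hq
      (fun t => by simp only [Pi.zero_apply]; positivity)
  -- the squared norm g and its derivative
  set g : ℝ → ℝ := fun t => (⟪φ t, φ t⟫_ℂ).re with hgdef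
  have hg0 : ∀ t, 0 ≤ g t := by
    intro t
    have : g t = ‖φ t‖ ^ 2 := hres (φ t)
    rw [this]
    positivity
  have hg : ∀ t : ℝ, HasDerivAt g (4 * q t) t := by
    intro t
    have hin := (hφ t).inner (𝕜 := ℂ) (hφ t)
    have hre := Complex.reCLM.hasFDerivAt.comp_hasDerivAt t hin
    simp only [Complex.reCLM_apply] at hre
    refine hre.congr_deriv ?_
    have h1 : ⟪φ t, A (φ t)⟫_ℂ = ⟪A (φ t), φ t⟫_ℂ := (hherm (φ t) (φ t)).symm
    rw [Complex.add_re, h1, hqdef]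
    simp only
    rw [hq_re]
    ring
  -- for every ε > 0, eventually q t ≥ -ε
  have hqlb : ∀ ε : ℝ, 0 < ε → ∃ t : ℝ, -ε ≤ q t := by
    intro ε hε
    by_contra hcon
    push_neg at hcon
    set h : ℝ → ℝ := fun t => g t + 4 * ε * t with hhdef
    have hh : ∀ t : ℝ, HasDerivAt h (4 * q t + 4 * ε) t := by
      intro t
      have := (hg t).add (((hasDerivAt_id t).const_mul (4 * ε)))
      exact this.congr_deriv (by ring)
    have hanti : Antitone h :=
      antitone_of_hasDerivAt_nonpos hh (fun t => by
        have := hcon t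
        simp only [Pi.zero_apply]
        linarith)
    set t0 : ℝ := g 0 / (4 * ε) + 1 with ht0def
    have ht0 : 0 ≤ t0 := by
      have := hg0 0
      have h4 : 0 < 4 * ε := by linarith
      positivity
    have hle := hanti ht0
    have h40 : (4 : ℝ) * ε ≠ 0 := by positivity
    have : 4 * ε * t0 = g 0 + 4 * ε := by
      rw [ht0def]; field_simp
    have hg0' := hg0 0
    have hgt0 := hg0 t0
    simp only [hhdef] at hle
    -- h t0 ≤ h 0 : g t0 + 4ε t0 ≤ g 0
    nlinarith
  have hev : ∀ ε : ℝ, 0 < ε → ∀ᶠ t : ℝ in atTop, -ε ≤ q t := by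
    intro ε hε
    obtain ⟨t0, ht0⟩ := hqlb ε hε
    filter_upwards [eventually_ge_atTop t0] with t ht
    exact le_trans ht0 (hqmono ht)
  -- conclude on the liminf
  have : (0 : EReal) ≤ liminf (fun t : ℝ => ((q t : ℝ) : EReal)) atTop := by
    by_contra hlt
    push_neg at hlt
    obtain ⟨r, hr1, hr2⟩ := EReal.exists_between_coe_real hlt
    have hrneg : r < 0 := by exact_mod_cast hr2
    have hε : 0 < -r := by linarith
    have hev' : ∀ᶠ t : ℝ in atTop, (r : EReal) ≤ ((q t : ℝ) : EReal) := by
      filter_upwards [hev (-r) hε] with t ht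
      exact_mod_cast (by linarith : r ≤ q t)
    exact absurd (le_liminf_of_le (by isBoundedDefault) hev') (not_le.2 hr1)
  exact this


end Stmt5Aux

namespace Stmt5Aux

open Stmt5 in
lemma weight_le
    {V W U : Type*}
    [NormedAddCommGroup V] [InnerProductSpace ℂ V] [FiniteDimensional ℂ V]
    [NormedAddCommGroup W] [InnerProductSpace ℂ W] [FiniteDimensional ℂ W]
    [NormedAddCommGroup U] [InnerProductSpace ℂ U] [FiniteDimensional ℂ U]
    {𝔠 : Type*} [NormedAddCommGroup 𝔠] [InnerProductSpace ℝ 𝔠]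
    (iV : V →ₗᵢ[ℂ] U) (iW : W →ₗᵢ[ℂ] U)
    (horth : ∀ (v : V) (w : W), ⟪iV v, iW w⟫_ℂ = 0)
    (ρV : 𝔠 →ₗ[ℝ] (V →L[ℂ] V)) (ρW : 𝔠 →ₗ[ℝ] (W →L[ℂ] W)) (ρU : 𝔠 →ₗ[ℝ] (U →L[ℂ] U))
    (hskewU : ∀ (ξ : 𝔠) (x y : U), ⟪ρU ξ x, y⟫_ℂ = - ⟪x, ρU ξ y⟫_ℂ)
    (hρV : ∀ (ξ : 𝔠) (v : V), ρU ξ (iV v) = iV (ρV ξ v))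
    (hρW : ∀ (ξ : 𝔠) (w : W), ρU ξ (iW w) = iW (ρW ξ w))
    (θ : 𝔠 →ₗ[ℝ] ℝ) (ξ : 𝔠) (a : V) (b : W) :
    Stmt5.weight V 𝔠 ρV θ ξ a ≤ Stmt5.weight U 𝔠 ρU θ ξ (iV a + iW b) := by
  have hskewW : ∀ x y : W, ⟪ρW ξ x, y⟫_ℂ = - ⟪x, ρW ξ y⟫_ℂ := by
    intro x y
    calc ⟪ρW ξ x, y⟫_ℂ = ⟪iW (ρW ξ x), iW y⟫_ℂ := (iW.inner_map_map _ _).symm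
      _ = ⟪ρU ξ (iW x), iW y⟫_ℂ := by rw [hρW]
      _ = - ⟪iW x, ρU ξ (iW y)⟫_ℂ := hskewU ξ _ _
      _ = - ⟪iW x, iW (ρW ξ y)⟫_ℂ := by rw [hρW]
      _ = - ⟪x, ρW ξ y⟫_ℂ := by rw [iW.inner_map_map]
  set fV : ℝ → ℝ := fun t =>
    (1/2 : ℝ) * (⟪ρV ξ (NormedSpace.exp ((t : ℂ) • (Complex.I • ρV ξ)) a),
      NormedSpace.exp ((t : ℂ) • (Complex.I • ρV ξ)) a⟫_ℂ).im + θ ξ with hfV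
  set q : ℝ → ℝ := fun t =>
    (1/2 : ℝ) * (⟪ρW ξ (NormedSpace.exp ((t : ℂ) • (Complex.I • ρW ξ)) b),
      NormedSpace.exp ((t : ℂ) • (Complex.I • ρW ξ)) b⟫_ℂ).im with hq
  have hliminf : (0 : EReal) ≤ liminf (fun t : ℝ => ((q t : ℝ) : EReal)) atTop :=
    liminf_nonneg (ρW ξ) hskewW b
  have hdecomp : ∀ t : ℝ,
      ((1/2 : ℝ) * (⟪ρU ξ (NormedSpace.exp ((t : ℂ) • (Complex.I • ρU ξ)) (iV a + iW b)),
        NormedSpace.exp ((t : ℂ) • (Complex.I • ρU ξ)) (iV a + iW b)⟫_ℂ).im + θ ξ)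
      = fV t + q t := by
    intro t
    have hintV : ∀ x : V, ((t : ℂ) • (Complex.I • ρU ξ)) (iV x)
        = iV (((t : ℂ) • (Complex.I • ρV ξ)) x) := by
      intro x
      simp only [ContinuousLinearMap.smul_apply, hρV, map_smul]
    have hintW : ∀ x : W, ((t : ℂ) • (Complex.I • ρU ξ)) (iW x)
        = iW (((t : ℂ) • (Complex.I • ρW ξ)) x) := by
      intro x
      simp only [ContinuousLinearMap.smul_apply, hρW, map_smul]
    set aT := NormedSpace.exp ((t : ℂ) • (Complex.I • ρV ξ)) a with haT
    set bT := NormedSpace.exp ((t : ℂ) • (Complex.I • ρW ξ)) b with hbT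
    have hexp : NormedSpace.exp ((t : ℂ) • (Complex.I • ρU ξ)) (iV a + iW b)
        = iV aT + iW bT := by
      rw [map_add, exp_intertwine iV _ _ hintV a, exp_intertwine iW _ _ hintW b]
    rw [hexp]
    have hx : ρU ξ (iV aT + iW bT) = iV (ρV ξ aT) + iW (ρW ξ bT) := by
      rw [map_add, hρV, hρW]
    rw [hx]
    have h0 : ⟪iW (ρW ξ bT), iV aT⟫_ℂ = 0 := by
      rw [← inner_conj_symm, horth]
      simp
    rw [inner_add_left, inner_add_right, inner_add_right, horth, h0,
      iV.inner_map_map, iW.inner_map_map]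
    simp only [add_zero, zero_add, Complex.add_im]
    ring
  have hUw : Stmt5.weight U 𝔠 ρU θ ξ (iV a + iW b)
      = limsup ((fun t : ℝ => ((fV t : ℝ) : EReal))
          + fun t : ℝ => ((q t : ℝ) : EReal)) atTop := by
    unfold Stmt5.weight
    congr 1
    funext t
    rw [Pi.add_apply, ← EReal.coe_add]
    exact congrArg (fun r : ℝ => (r : EReal)) (hdecomp t)
  have hVw : Stmt5.weight V 𝔠 ρV θ ξ a
      = limsup (fun t : ℝ => ((fV t : ℝ) : EReal)) atTop := rfl
  rw [hUw, hVw]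
  calc limsup (fun t : ℝ => ((fV t : ℝ) : EReal)) atTop
      = limsup (fun t : ℝ => ((fV t : ℝ) : EReal)) atTop + 0 := (add_zero _).symm
    _ ≤ limsup (fun t : ℝ => ((fV t : ℝ) : EReal)) atTop
        + liminf (fun t : ℝ => ((q t : ℝ) : EReal)) atTop := add_le_add (le_refl _) hliminf
    _ ≤ _ := EReal.le_limsup_add

end Stmt5Aux

theorem statement5
    (V W U : Type*)
    [NormedAddCommGroup V] [InnerProductSpace ℂ V] [FiniteDimensional ℂ V]
    [NormedAddCommGroup W] [InnerProductSpace ℂ W] [FiniteDimensional ℂ W]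
    [NormedAddCommGroup U] [InnerProductSpace ℂ U] [FiniteDimensional ℂ U]
    (𝔠 : Type*) [NormedAddCommGroup 𝔠] [InnerProductSpace ℝ 𝔠] [FiniteDimensional ℝ 𝔠]
    (C : Type*) [Group C] [TopologicalSpace C] [CompactSpace C]
    -- U = V ⊕ W as an orthogonal direct sum:
    (iV : V →ₗᵢ[ℂ] U) (iW : W →ₗᵢ[ℂ] U)
    (horth : ∀ (v : V) (w : W), ⟪iV v, iW w⟫_ℂ = 0)
    (hspan : LinearMap.range iV.toLinearMap ⊔ LinearMap.range iW.toLinearMap = ⊤)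
    -- the projection p : U → V:
    (p : U →ₗ[ℂ] V) (hpV : ∀ v : V, p (iV v) = v) (hpW : ∀ w : W, p (iW w) = 0)
    -- unitary representations and skew-Hermitian infinitesimal actions:
    (πV : C →* (V ≃ₗᵢ[ℂ] V)) (πW : C →* (W ≃ₗᵢ[ℂ] W)) (πU : C →* (U ≃ₗᵢ[ℂ] U))
    (ρV : 𝔠 →ₗ[ℝ] (V →L[ℂ] V)) (ρW : 𝔠 →ₗ[ℝ] (W →L[ℂ] W)) (ρU : 𝔠 →ₗ[ℝ] (U →L[ℂ] U))
    (hskewU : ∀ (ξ : 𝔠) (x y : U), ⟪ρU ξ x, y⟫_ℂ = - ⟪x, ρU ξ y⟫_ℂ)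
    (hπV : ∀ (c : C) (v : V), πU c (iV v) = iV (πV c v))
    (hπW : ∀ (c : C) (w : W), πU c (iW w) = iW (πW c w))
    (hρV : ∀ (ξ : 𝔠) (v : V), ρU ξ (iV v) = iV (ρV ξ v))
    (hρW : ∀ (ξ : 𝔠) (w : W), ρU ξ (iW w) = iW (ρW ξ w))
    -- the fixed moment-map constant θ of μ_V (and of its unique extension μ_U):
    (θ : 𝔠 →ₗ[ℝ] ℝ) :
    (p ⁻¹' { v : V | Stmt5.IsStable V 𝔠 ρV θ v } ⊆ { u : U | Stmt5.IsStable U 𝔠 ρU θ u })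
    ∧ (p ⁻¹' { v : V | Stmt5.IsSemistable V 𝔠 ρV θ v }
        ⊆ { u : U | Stmt5.IsSemistable U 𝔠 ρU θ u }) := by
  have key : ∀ (u : U) (ξ : 𝔠),
      Stmt5.weight V 𝔠 ρV θ ξ (p u) ≤ Stmt5.weight U 𝔠 ρU θ ξ u := by
    intro u ξ
    have hmem : u ∈ (⊤ : Submodule ℂ U) := trivial
    rw [← hspan] at hmem
    obtain ⟨x, hx, y, hy, rfl⟩ := Submodule.mem_sup.1 hmem
    obtain ⟨a, rfl⟩ := LinearMap.mem_range.1 hx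
    obtain ⟨b, rfl⟩ := LinearMap.mem_range.1 hy
    have hpu : p (iV.toLinearMap a + iW.toLinearMap b) = a := by
      simp only [map_add, LinearIsometry.coe_toLinearMap, hpV, hpW, add_zero]
    rw [hpu]
    simpa only [LinearIsometry.coe_toLinearMap] using
      Stmt5Aux.weight_le iV iW horth ρV ρW ρU hskewU hρV hρW θ ξ a b
  constructor
  · intro u hu ξ hξ
    exact lt_of_lt_of_le (hu ξ hξ) (key u ξ)
  · intro u hu ξ hξ
    exact le_trans (hu ξ hξ) (key u ξ)
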